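/- arXiv:1709.09329 — 2 statements merged into one kernel-verified Lean document; each statement's English description precedes it below -/
import Mathlib

section
/- Let N = (1, 2, …, n+1) with n ≥ 1, let ∅ ≠ J ⊊ N, and put J^c = N ∖ J (as an increasing sequence). Then for arbitrary real Cayley–Menger data: (i) for every k ∈ J, Σ_{j∈J} B(0 ⋆ ∂_j N ; 0 j ∂_j N) · B(0 k J^c ; 0 j J^c) = B(0 N) · B(0 ⋆ J^c ; 0 k J^c); and (ii) Σ_{j∈J} B(0 ⋆ ∂_j N ; 0 j ∂_j N) · B(0 ⋆ J^c ; 0 j J^c) + B(0 ⋆ N) · B(0 J^c) = B(0 N) · B(0 ⋆ J^c). -/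
inductive CMIdx (m : ℕ) : Type
  | zero : CMIdx m
  | star : CMIdx m
  | pt : Fin m → CMIdx m

/-- Entry of the Cayley–Menger matrix with squared radii `rsq` and squared distances `ρsq`. -/
def cmEnt {m : ℕ} (rsq : Fin m → ℝ) (ρsq : Fin m → Fin m → ℝ) : CMIdx m → CMIdx m → ℝ
  | CMIdx.zero, CMIdx.zero => 0
  | CMIdx.zero, _ => 1
  | _, CMIdx.zero => 1
  | CMIdx.star, CMIdx.star => 0
  | CMIdx.star, CMIdx.pt j => rsq j
  | CMIdx.pt j, CMIdx.star => rsq j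
  | CMIdx.pt j, CMIdx.pt k => if j = k then 0 else ρsq j k

/-- Minor `B(rows ; cols)` of the Cayley–Menger matrix. -/
noncomputable def cmMinor {m : ℕ} (rsq : Fin m → ℝ) (ρsq : Fin m → Fin m → ℝ)
    (rows cols : List (CMIdx m)) : ℝ :=
  if h : rows.length = cols.length then
    Matrix.det (Matrix.of fun i j : Fin rows.length =>
      cmEnt rsq ρsq (rows.get i) (cols.get (Fin.cast h j)))
  else 0

/-- The increasing sequence `N = (1, …, n+1)` (as indices of `Fin (n+1)`). -/
def fullList (n : ℕ) : List (CMIdx (n + 1)) :=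
  (List.finRange (n + 1)).map CMIdx.pt

/-- `∂_j N` : the increasing sequence `N` with the entry `j` deleted. -/
def delList (n : ℕ) (j : Fin (n + 1)) : List (CMIdx (n + 1)) :=
  ((List.finRange (n + 1)).erase j).map CMIdx.pt

/-- The complement `J^c` of `J` in `N`, as an increasing sequence. -/
def complList (n : ℕ) (J : Finset (Fin (n + 1))) : List (CMIdx (n + 1)) :=
  ((List.finRange (n + 1)).filter fun a => a ∉ J).map CMIdx.pt

section CMAux
open Matrix

def cmEquiv (m : ℕ) : CMIdx m ≃ Bool ⊕ Fin m where
  toFun x :=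
    match x with
    | CMIdx.zero => Sum.inl false
    | CMIdx.star => Sum.inl true
    | CMIdx.pt j => Sum.inr j
  invFun x :=
    match x with
    | Sum.inl false => CMIdx.zero
    | Sum.inl true => CMIdx.star
    | Sum.inr j => CMIdx.pt j
  left_inv x := by cases x <;> rfl
  right_inv x := by rcases x with (_ | _) | j <;> rfl

instance {m : ℕ} : DecidableEq (CMIdx m) := (cmEquiv m).decidableEq
instance {m : ℕ} : Fintype (CMIdx m) := Fintype.ofEquiv _ (cmEquiv m).symm

lemma pt_injective {m : ℕ} : Function.Injective (@CMIdx.pt m) := fun a b h => by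
  cases h; rfl

def cmMat (n : ℕ) (rsq : Fin (n+1) → ℝ) (ρsq : Fin (n+1) → Fin (n+1) → ℝ) :
    Matrix (CMIdx (n+1)) (CMIdx (n+1)) ℝ := Matrix.of fun a b => cmEnt rsq ρsq a b

lemma cmMinor_eq_det {m : ℕ} (rsq : Fin m → ℝ) (ρsq : Fin m → Fin m → ℝ)
    (rows cols : List (CMIdx m)) (h : rows.length = cols.length) :
    cmMinor rsq ρsq rows cols = Matrix.det (Matrix.of fun i j : Fin rows.length =>
      cmEnt rsq ρsq (rows.get i) (cols.get (Fin.cast h j))) := dif_pos h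

variable (n : ℕ) (rsq : Fin (n+1) → ℝ) (ρsq : Fin (n+1) → Fin (n+1) → ℝ)

lemma delList_nodup (j : Fin (n+1)) : (delList n j).Nodup :=
  ((List.nodup_finRange _).erase _).map pt_injective

lemma cofactor_pt (j : Fin (n + 1)) :
    cmMinor rsq ρsq (CMIdx.zero :: CMIdx.star :: delList n j)
        (CMIdx.zero :: CMIdx.pt j :: delList n j) =
      - Matrix.adjugate (cmMat n rsq ρsq) CMIdx.star (CMIdx.pt j) := by
  classical
  set d := delList n j with hd
  have hnd : (CMIdx.zero :: CMIdx.pt j :: CMIdx.star :: d).Nodup := by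
    simp [List.nodup_cons, hd, delList, (List.nodup_finRange (n+1)).not_mem_erase]
    exact ((List.nodup_finRange _).erase _).map pt_injective
  have hmem : ∀ x, x ∈ (CMIdx.zero :: CMIdx.pt j :: CMIdx.star :: d) := by
    intro x
    cases x with
    | zero => simp
    | star => simp
    | pt i =>
        rcases eq_or_ne i j with hij | hij
        · subst hij; simp
        · have : CMIdx.pt i ∈ d := by
            rw [hd, delList]
            exact List.mem_map_of_mem
              ((List.mem_erase_of_ne hij).mpr (List.mem_finRange i))
          simp [this]
  have hlen : d.length + 3 = (CMIdx.zero :: CMIdx.pt j :: CMIdx.star :: d).length := rfl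
  let e : Fin (d.length + 3) ≃ CMIdx (n + 1) :=
    (finCongr hlen).trans (List.Nodup.getEquivOfForallMemList _ hnd hmem)
  set i1 : Fin (d.length + 3) := ⟨1, by omega⟩ with hi1
  set c2 : Fin (d.length + 3) := ⟨2, by omega⟩ with hc2
  have he1 : e i1 = CMIdx.pt j := rfl
  have he2 : e c2 = CMIdx.star := rfl
  rw [Matrix.adjugate_apply]
  set X := (cmMat n rsq ρsq).updateRow (CMIdx.pt j) (Pi.single CMIdx.star 1) with hX
  have hzero : ∀ b : Fin (d.length + 3), b ≠ c2 →
      (-1:ℝ)^((i1:ℕ)+(b:ℕ)) * (X.submatrix e e) i1 b *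
        Matrix.det ((X.submatrix e e).submatrix i1.succAbove b.succAbove) = 0 := by
    intro b hb
    have hbe : e b ≠ CMIdx.star := fun hsb => hb (e.injective (hsb.trans he2.symm))
    have : (X.submatrix e e) i1 b = 0 := by
      rw [Matrix.submatrix_apply, he1, hX, Matrix.updateRow_self, Pi.single_eq_of_ne hbe]
    rw [this]; ring
  have hdet : Matrix.det (X.submatrix e e) =
      - Matrix.det ((X.submatrix e e).submatrix i1.succAbove c2.succAbove) := by
    rw [Matrix.det_succ_row (X.submatrix e e) i1,
      Fintype.sum_eq_single c2 (hzero)]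
    have hent : (X.submatrix e e) i1 c2 = 1 := by
      rw [Matrix.submatrix_apply, he1, he2, hX, Matrix.updateRow_self, Pi.single_eq_same]
    have hsign : ((i1:ℕ) + (c2:ℕ)) = 3 := rfl
    rw [hent, hsign]; ring
  have hminor : (Matrix.of fun i l : Fin ((CMIdx.zero :: CMIdx.star :: d).length) =>
        cmEnt rsq ρsq ((CMIdx.zero :: CMIdx.star :: d).get i)
          ((CMIdx.zero :: CMIdx.pt j :: d).get (Fin.cast rfl l)))
      = (X.submatrix e e).submatrix i1.succAbove c2.succAbove := by
    ext i l
    rcases i with ⟨iv, hiv⟩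
    rcases l with ⟨lv, hlv⟩
    have hrow : e (i1.succAbove ⟨iv, hiv⟩) = (CMIdx.zero :: CMIdx.star :: d).get ⟨iv, hiv⟩ := by
      match iv, hiv with
      | 0, h => rfl
      | v+1, h => rfl
    have hcol : e (c2.succAbove ⟨lv, hlv⟩) = (CMIdx.zero :: CMIdx.pt j :: d).get ⟨lv, hlv⟩ := by
      match lv, hlv with
      | 0, h => rfl
      | 1, h => rfl
      | v+2, h => rfl
    have hne : e (i1.succAbove ⟨iv, hiv⟩) ≠ CMIdx.pt j := by
      intro hcontra
      exact Fin.succAbove_ne i1 ⟨iv, hiv⟩ (e.injective (hcontra.trans he1.symm))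
    simp only [Matrix.submatrix_apply, Matrix.of_apply, hX]
    rw [Matrix.updateRow_ne hne, hrow, hcol]
    rfl
  rw [← Matrix.det_submatrix_equiv_self e, hdet, cmMinor_eq_det rsq ρsq (CMIdx.zero :: CMIdx.star :: d) (CMIdx.zero :: CMIdx.pt j :: d) rfl, hminor]
  rw [neg_neg]
lemma adj_star_star :
    Matrix.adjugate (cmMat n rsq ρsq) CMIdx.star CMIdx.star =
      cmMinor rsq ρsq (CMIdx.zero :: fullList n) (CMIdx.zero :: fullList n) := by
  classical
  set f := fullList n with hf
  have hnd : (CMIdx.star :: CMIdx.zero :: f).Nodup := by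
    simp [List.nodup_cons, hf, fullList]
    exact (List.nodup_finRange _).map pt_injective
  have hmem : ∀ x, x ∈ (CMIdx.star :: CMIdx.zero :: f) := by
    intro x
    cases x with
    | zero => simp
    | star => simp
    | pt i => simp [hf, fullList]
  have hlen : f.length + 2 = (CMIdx.star :: CMIdx.zero :: f).length := rfl
  let e : Fin (f.length + 2) ≃ CMIdx (n + 1) :=
    (finCongr hlen).trans (List.Nodup.getEquivOfForallMemList _ hnd hmem)
  set i0 : Fin (f.length + 2) := ⟨0, by omega⟩ with hi0
  have he0 : e i0 = CMIdx.star := rfl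
  rw [Matrix.adjugate_apply]
  set X := (cmMat n rsq ρsq).updateRow CMIdx.star (Pi.single CMIdx.star 1) with hX
  have hzero : ∀ b : Fin (f.length + 2), b ≠ i0 →
      (-1:ℝ)^((i0:ℕ)+(b:ℕ)) * (X.submatrix e e) i0 b *
        Matrix.det ((X.submatrix e e).submatrix i0.succAbove b.succAbove) = 0 := by
    intro b hb
    have hbe : e b ≠ CMIdx.star := fun hsb => hb (e.injective (hsb.trans he0.symm))
    have : (X.submatrix e e) i0 b = 0 := by
      rw [Matrix.submatrix_apply, he0, hX, Matrix.updateRow_self, Pi.single_eq_of_ne hbe]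
    rw [this]; ring
  have hdet : Matrix.det (X.submatrix e e) =
      Matrix.det ((X.submatrix e e).submatrix i0.succAbove i0.succAbove) := by
    rw [Matrix.det_succ_row (X.submatrix e e) i0, Fintype.sum_eq_single i0 hzero]
    have hent : (X.submatrix e e) i0 i0 = 1 := by
      rw [Matrix.submatrix_apply, he0, hX, Matrix.updateRow_self, Pi.single_eq_same]
    have hsign : ((i0:ℕ) + (i0:ℕ)) = 0 := rfl
    rw [hent, hsign]; ring
  have hminor : (Matrix.of fun i l : Fin ((CMIdx.zero :: f).length) =>
        cmEnt rsq ρsq ((CMIdx.zero :: f).get i)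
          ((CMIdx.zero :: f).get (Fin.cast rfl l)))
      = (X.submatrix e e).submatrix i0.succAbove i0.succAbove := by
    ext i l
    rcases i with ⟨iv, hiv⟩
    rcases l with ⟨lv, hlv⟩
    have hne : e (i0.succAbove ⟨iv, hiv⟩) ≠ CMIdx.star := fun hc =>
      Fin.succAbove_ne i0 ⟨iv, hiv⟩ (e.injective (hc.trans he0.symm))
    simp only [Matrix.submatrix_apply, Matrix.of_apply, hX]
    rw [Matrix.updateRow_ne hne]
    rfl
  rw [← Matrix.det_submatrix_equiv_self e, hdet,
    cmMinor_eq_det rsq ρsq (CMIdx.zero :: f) (CMIdx.zero :: f) rfl, hminor]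

lemma det_cmMat :
    (cmMat n rsq ρsq).det =
      cmMinor rsq ρsq (CMIdx.zero :: CMIdx.star :: fullList n)
        (CMIdx.zero :: CMIdx.star :: fullList n) := by
  classical
  set f := fullList n with hf
  have hnd : (CMIdx.zero :: CMIdx.star :: f).Nodup := by
    simp [List.nodup_cons, hf, fullList]
    exact (List.nodup_finRange _).map pt_injective
  have hmem : ∀ x, x ∈ (CMIdx.zero :: CMIdx.star :: f) := by
    intro x
    cases x with
    | zero => simp
    | star => simp
    | pt i => simp [hf, fullList]
  have hlen : f.length + 2 = (CMIdx.zero :: CMIdx.star :: f).length := rfl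
  let e : Fin (f.length + 2) ≃ CMIdx (n + 1) :=
    (finCongr hlen).trans (List.Nodup.getEquivOfForallMemList _ hnd hmem)
  have hm : (Matrix.of fun i l : Fin ((CMIdx.zero :: CMIdx.star :: f).length) =>
        cmEnt rsq ρsq ((CMIdx.zero :: CMIdx.star :: f).get i)
          ((CMIdx.zero :: CMIdx.star :: f).get (Fin.cast rfl l)))
      = (cmMat n rsq ρsq).submatrix e e := by
    ext i l
    rfl
  rw [← Matrix.det_submatrix_equiv_self e,
    cmMinor_eq_det rsq ρsq (CMIdx.zero :: CMIdx.star :: f)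
      (CMIdx.zero :: CMIdx.star :: f) rfl, hm]
lemma sum_cmidx {m : ℕ} (f : CMIdx m → ℝ) :
    ∑ c : CMIdx m, f c = f CMIdx.zero + f CMIdx.star + ∑ j : Fin m, f (CMIdx.pt j) := by
  rw [← Equiv.sum_comp (cmEquiv m).symm f, Fintype.sum_sum_type, Fintype.sum_bool]
  show f CMIdx.star + f CMIdx.zero + ∑ j : Fin m, f (CMIdx.pt j) = _
  ring

lemma cmEnt_symm {m : ℕ} (rsq' : Fin m → ℝ) (ρsq' : Fin m → Fin m → ℝ)
    (hsym : ∀ i j, ρsq' i j = ρsq' j i) (a b : CMIdx m) :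
    cmEnt rsq' ρsq' a b = cmEnt rsq' ρsq' b a := by
  cases a <;> cases b <;> simp only [cmEnt]
  rename_i j k
  by_cases h : j = k
  · subst h; simp
  · rw [if_neg h, if_neg (Ne.symm h), hsym]

lemma cmMinor_comm {m : ℕ} (rsq' : Fin m → ℝ) (ρsq' : Fin m → Fin m → ℝ)
    (hsym : ∀ i j, ρsq' i j = ρsq' j i)
    (R C : List (CMIdx m)) (h : R.length = C.length) :
    cmMinor rsq' ρsq' R C = cmMinor rsq' ρsq' C R := by
  rw [cmMinor_eq_det rsq' ρsq' R C h, cmMinor_eq_det rsq' ρsq' C R h.symm]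
  rw [← Matrix.det_transpose (Matrix.of fun i j : Fin R.length =>
      cmEnt rsq' ρsq' (R.get i) (C.get (Fin.cast h j)))]
  rw [← Matrix.det_submatrix_equiv_self (finCongr h.symm)]
  congr 1
  ext i j
  simp only [Matrix.submatrix_apply, Matrix.transpose_apply, Matrix.of_apply]
  rw [cmEnt_symm rsq' ρsq' hsym]
  congr 1

lemma det_updateCol_finset_sum {k : Type*} [Fintype k] [DecidableEq k]
    (A : Matrix k k ℝ) (j : k) {ι : Type*} (s : Finset ι) (f : ι → k → ℝ) :
    (A.updateCol j (∑ i ∈ s, f i)).det = ∑ i ∈ s, (A.updateCol j (f i)).det := by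
  induction s using Finset.cons_induction with
  | empty =>
      simp only [Finset.sum_empty]
      exact Matrix.det_eq_zero_of_column_eq_zero j fun i => by
        simp [Matrix.updateCol_self]
  | cons a s ha ih =>
      rw [Finset.sum_cons, Finset.sum_cons, Matrix.det_updateCol_add, ih]

def fin1 (q : ℕ) : Fin (q + 2) := ⟨1, by omega⟩

def baseM (J : Finset (Fin (n+1))) (x : CMIdx (n+1)) :
    Matrix (Fin ((complList n J).length + 2)) (Fin ((complList n J).length + 2)) ℝ :=
  Matrix.of fun i l =>
    cmEnt rsq ρsq ((CMIdx.zero :: x :: complList n J).get i)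
      ((CMIdx.zero :: CMIdx.zero :: complList n J).get l)

lemma cmMinor_eq_update (J : Finset (Fin (n+1))) (x c : CMIdx (n+1)) :
    cmMinor rsq ρsq (CMIdx.zero :: x :: complList n J) (CMIdx.zero :: c :: complList n J)
      = ((baseM n rsq ρsq J x).updateCol (fin1 _)
          (fun i => cmEnt rsq ρsq ((CMIdx.zero :: x :: complList n J).get i) c)).det := by
  rw [cmMinor_eq_det rsq ρsq (CMIdx.zero :: x :: complList n J)
    (CMIdx.zero :: c :: complList n J) rfl]
  have hm : (Matrix.of fun i l : Fin ((CMIdx.zero :: x :: complList n J).length) =>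
        cmEnt rsq ρsq ((CMIdx.zero :: x :: complList n J).get i)
          ((CMIdx.zero :: c :: complList n J).get (Fin.cast rfl l)))
      = (baseM n rsq ρsq J x).updateCol (fin1 _)
          (fun i => cmEnt rsq ρsq ((CMIdx.zero :: x :: complList n J).get i) c) := by
    ext i l
    rcases l with ⟨lv, hlv⟩
    match lv, hlv with
    | 0, h =>
        rw [Matrix.updateCol_apply, if_neg (by simp [fin1, Fin.ext_iff])]
        rfl
    | 1, h =>
        rw [Matrix.updateCol_apply, if_pos (by simp [fin1, Fin.ext_iff])]
        rfl
    | v+2, h =>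
        rw [Matrix.updateCol_apply, if_neg (by simp [fin1, Fin.ext_iff])]
        rfl
  rw [hm]

lemma upd_zero (J : Finset (Fin (n+1))) (x : CMIdx (n+1)) :
    ((baseM n rsq ρsq J x).updateCol (fin1 _)
      (fun i => cmEnt rsq ρsq ((CMIdx.zero :: x :: complList n J).get i) CMIdx.zero)).det
      = 0 := by
  rw [← cmMinor_eq_update n rsq ρsq J x CMIdx.zero,
    cmMinor_eq_det rsq ρsq (CMIdx.zero :: x :: complList n J)
      (CMIdx.zero :: CMIdx.zero :: complList n J) rfl]
  exact Matrix.det_zero_of_column_eq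
    (i := (⟨0, by simp only [List.length_cons]; omega⟩ :
      Fin ((CMIdx.zero :: x :: complList n J).length)))
    (j := (⟨1, by simp only [List.length_cons]; omega⟩ :
      Fin ((CMIdx.zero :: x :: complList n J).length)))
    (by simp [Fin.ext_iff]) (fun k => rfl)

lemma hA_lemma (hsym : ∀ i j, ρsq i j = ρsq j i) (J : Finset (Fin (n+1)))
    (x : CMIdx (n+1)) :
    ∑ c : CMIdx (n+1), Matrix.adjugate (cmMat n rsq ρsq) CMIdx.star c *
        ((baseM n rsq ρsq J x).updateCol (fin1 _)
          (fun i => cmEnt rsq ρsq ((CMIdx.zero :: x :: complList n J).get i) c)).det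
      = (cmMat n rsq ρsq).det * ((baseM n rsq ρsq J x).updateCol (fin1 _)
          (fun i => if CMIdx.star = (CMIdx.zero :: x :: complList n J).get i
            then (1:ℝ) else 0)).det := by
  classical
  have hvec : (∑ c : CMIdx (n+1), (Matrix.adjugate (cmMat n rsq ρsq) CMIdx.star c) •
        fun i => cmEnt rsq ρsq ((CMIdx.zero :: x :: complList n J).get i) c)
      = (cmMat n rsq ρsq).det • fun i =>
          if CMIdx.star = (CMIdx.zero :: x :: complList n J).get i then (1:ℝ) else 0 := by
    funext i
    rw [Finset.sum_apply]
    have h2 : ∀ c : CMIdx (n+1),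
        ((Matrix.adjugate (cmMat n rsq ρsq) CMIdx.star c) •
          fun i' => cmEnt rsq ρsq ((CMIdx.zero :: x :: complList n J).get i') c) i
        = Matrix.adjugate (cmMat n rsq ρsq) CMIdx.star c * (cmMat n rsq ρsq) c
            ((CMIdx.zero :: x :: complList n J).get i) := by
      intro c
      have h3 : cmEnt rsq ρsq ((CMIdx.zero :: x :: complList n J).get i) c
          = (cmMat n rsq ρsq) c ((CMIdx.zero :: x :: complList n J).get i) := by
        rw [cmEnt_symm rsq ρsq hsym]; rfl
      rw [Pi.smul_apply, smul_eq_mul, h3]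
    rw [Finset.sum_congr rfl fun c _ => h2 c, ← Matrix.mul_apply, Matrix.adjugate_mul]
    simp [Matrix.one_apply]
  calc ∑ c : CMIdx (n+1), Matrix.adjugate (cmMat n rsq ρsq) CMIdx.star c *
        ((baseM n rsq ρsq J x).updateCol (fin1 _)
          (fun i => cmEnt rsq ρsq ((CMIdx.zero :: x :: complList n J).get i) c)).det
      = ∑ c : CMIdx (n+1), ((baseM n rsq ρsq J x).updateCol (fin1 _)
          ((Matrix.adjugate (cmMat n rsq ρsq) CMIdx.star c) •
            fun i => cmEnt rsq ρsq ((CMIdx.zero :: x :: complList n J).get i) c)).det :=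
        Finset.sum_congr rfl fun c _ =>
          (Matrix.det_updateCol_smul _ _ _ _).symm
    _ = ((baseM n rsq ρsq J x).updateCol (fin1 _)
          (∑ c : CMIdx (n+1), (Matrix.adjugate (cmMat n rsq ρsq) CMIdx.star c) •
            fun i => cmEnt rsq ρsq ((CMIdx.zero :: x :: complList n J).get i) c)).det :=
        (det_updateCol_finset_sum _ _ _ _).symm
    _ = ((baseM n rsq ρsq J x).updateCol (fin1 _)
          ((cmMat n rsq ρsq).det • fun i =>
            if CMIdx.star = (CMIdx.zero :: x :: complList n J).get i
              then (1:ℝ) else 0)).det := by rw [hvec]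
    _ = (cmMat n rsq ρsq).det * ((baseM n rsq ρsq J x).updateCol (fin1 _)
          (fun i => if CMIdx.star = (CMIdx.zero :: x :: complList n J).get i
            then (1:ℝ) else 0)).det := Matrix.det_updateCol_smul _ _ _ _

lemma key_sum (hsym : ∀ i j, ρsq i j = ρsq j i) (J : Finset (Fin (n + 1)))
    (x : CMIdx (n + 1)) :
    ∑ j ∈ J,
        cmMinor rsq ρsq (CMIdx.zero :: CMIdx.star :: delList n j)
            (CMIdx.zero :: CMIdx.pt j :: delList n j) *
          cmMinor rsq ρsq (CMIdx.zero :: x :: complList n J)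
            (CMIdx.zero :: CMIdx.pt j :: complList n J)
      = Matrix.adjugate (cmMat n rsq ρsq) CMIdx.star CMIdx.star *
          cmMinor rsq ρsq (CMIdx.zero :: x :: complList n J)
            (CMIdx.zero :: CMIdx.star :: complList n J)
        - (cmMat n rsq ρsq).det *
          ((baseM n rsq ρsq J x).updateCol (fin1 _)
            (fun i => if CMIdx.star = (CMIdx.zero :: x :: complList n J).get i
              then (1:ℝ) else 0)).det := by
  classical
  have hvan : ∀ j : Fin (n+1), j ∉ J →
      cmMinor rsq ρsq (CMIdx.zero :: x :: complList n J)
        (CMIdx.zero :: CMIdx.pt j :: complList n J) = 0 := by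
    intro j hj
    have hjc : CMIdx.pt j ∈ complList n J := by
      rw [complList]
      refine List.mem_map_of_mem ?_
      rw [List.mem_filter]
      exact ⟨List.mem_finRange j, by simpa using hj⟩
    obtain ⟨l0, hl0⟩ := List.mem_iff_get.mp hjc
    rw [cmMinor_eq_det rsq ρsq (CMIdx.zero :: x :: complList n J)
      (CMIdx.zero :: CMIdx.pt j :: complList n J) rfl]
    refine Matrix.det_zero_of_column_eq
      (i := (⟨1, by simp only [List.length_cons]; omega⟩ :
        Fin ((CMIdx.zero :: x :: complList n J).length)))
      (j := (⟨l0.val + 2, by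
        simp only [List.length_cons]
        have := l0.isLt
        omega⟩ : Fin ((CMIdx.zero :: x :: complList n J).length)))
      (by simp [Fin.ext_iff]) (fun k => ?_)
    simp only [Matrix.of_apply]
    congr 1
    show CMIdx.pt j = (complList n J).get l0
    exact hl0.symm
  rw [Finset.sum_subset (Finset.subset_univ J)
    (fun j _ hj => by rw [hvan j hj, mul_zero])]
  simp only [cofactor_pt n rsq ρsq, cmMinor_eq_update n rsq ρsq J x]
  have hsplit := sum_cmidx (fun c => Matrix.adjugate (cmMat n rsq ρsq) CMIdx.star c *
    ((baseM n rsq ρsq J x).updateCol (fin1 _)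
      (fun i => cmEnt rsq ρsq ((CMIdx.zero :: x :: complList n J).get i) c)).det)
  rw [hA_lemma n rsq ρsq hsym J x] at hsplit
  rw [upd_zero n rsq ρsq J x, mul_zero] at hsplit
  simp only [neg_mul]
  rw [Finset.sum_neg_distrib]
  linarith [hsplit]

lemma star_not_get_compl (J : Finset (Fin (n+1))) (v : ℕ)
    (h : v < (complList n J).length) :
    CMIdx.star ≠ (complList n J).get ⟨v, h⟩ := by
  intro hc
  have hmem : CMIdx.star ∈ complList n J := hc ▸ List.get_mem _ ⟨v, h⟩
  simp [complList] at hmem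

lemma ind_pt (J : Finset (Fin (n+1))) (k : Fin (n+1)) :
    ((baseM n rsq ρsq J (CMIdx.pt k)).updateCol (fin1 _)
      (fun i => if CMIdx.star = (CMIdx.zero :: CMIdx.pt k :: complList n J).get i
        then (1:ℝ) else 0)).det = 0 := by
  refine Matrix.det_eq_zero_of_column_eq_zero (fin1 _) fun i => ?_
  rw [Matrix.updateCol_self]
  rcases i with ⟨iv, hi⟩
  match iv, hi with
  | 0, h =>
      show (if CMIdx.star = CMIdx.zero then (1:ℝ) else 0) = 0
      simp
  | 1, h =>
      show (if CMIdx.star = CMIdx.pt k then (1:ℝ) else 0) = 0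
      simp
  | v+2, h =>
      show (if CMIdx.star = (complList n J).get ⟨v, _⟩ then (1:ℝ) else 0) = 0
      rw [if_neg (star_not_get_compl n J v _)]

lemma ind_star (J : Finset (Fin (n+1))) :
    ((baseM n rsq ρsq J CMIdx.star).updateCol (fin1 _)
      (fun i => if CMIdx.star = (CMIdx.zero :: CMIdx.star :: complList n J).get i
        then (1:ℝ) else 0)).det
      = cmMinor rsq ρsq (CMIdx.zero :: complList n J) (CMIdx.zero :: complList n J) := by
  classical
  have hind : (fun i : Fin ((complList n J).length + 2) =>
        if CMIdx.star = (CMIdx.zero :: CMIdx.star :: complList n J).get i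
          then (1:ℝ) else 0)
      = fun i => if i = fin1 _ then (1:ℝ) else 0 := by
    funext i
    rcases i with ⟨iv, hi⟩
    match iv, hi with
    | 0, h =>
        show (if CMIdx.star = CMIdx.zero then (1:ℝ) else 0) = _
        rw [if_neg (by simp), if_neg (by simp [fin1, Fin.ext_iff])]
    | 1, h =>
        show (if CMIdx.star = CMIdx.star then (1:ℝ) else 0) = _
        rw [if_pos rfl, if_pos (by simp [fin1, Fin.ext_iff])]
    | v+2, h =>
        show (if CMIdx.star = (complList n J).get ⟨v, _⟩ then (1:ℝ) else 0) = _
        rw [if_neg (star_not_get_compl n J v _), if_neg (by simp [fin1, Fin.ext_iff])]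
  rw [hind]
  have hz : ∀ b : Fin ((complList n J).length + 2), b ≠ fin1 _ →
      (-1:ℝ)^((b:ℕ)+((fin1 (complList n J).length : Fin _):ℕ)) *
        ((baseM n rsq ρsq J CMIdx.star).updateCol (fin1 _)
          (fun i => if i = fin1 _ then (1:ℝ) else 0)) b (fin1 _) *
        Matrix.det (((baseM n rsq ρsq J CMIdx.star).updateCol (fin1 _)
          (fun i => if i = fin1 _ then (1:ℝ) else 0)).submatrix
            b.succAbove (fin1 _).succAbove) = 0 := by
    intro b hb
    rw [Matrix.updateCol_self, if_neg hb]
    ring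
  rw [Matrix.det_succ_column ((baseM n rsq ρsq J CMIdx.star).updateCol (fin1 _)
    (fun i => if i = fin1 _ then (1:ℝ) else 0)) (fin1 _), Fintype.sum_eq_single (fin1 _) hz]
  rw [Matrix.updateCol_self, if_pos rfl]
  have hsign : (((fin1 (complList n J).length : Fin _) : ℕ)
      + ((fin1 (complList n J).length : Fin _) : ℕ)) = 2 := rfl
  rw [hsign]
  have hm : (Matrix.of fun i l : Fin ((CMIdx.zero :: complList n J).length) =>
        cmEnt rsq ρsq ((CMIdx.zero :: complList n J).get i)
          ((CMIdx.zero :: complList n J).get (Fin.cast rfl l)))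
      = ((baseM n rsq ρsq J CMIdx.star).updateCol (fin1 _)
          (fun i => if i = fin1 _ then (1:ℝ) else 0)).submatrix
            (fin1 _).succAbove (fin1 _).succAbove := by
    ext i l
    rcases i with ⟨iv, hi⟩
    rcases l with ⟨lv, hl⟩
    rw [Matrix.submatrix_apply,
      Matrix.updateCol_ne (Fin.succAbove_ne (fin1 _) ⟨lv, hl⟩)]
    match iv, hi, lv, hl with
    | 0, _, 0, _ => rfl
    | 0, _, v+1, _ => rfl
    | u+1, _, 0, _ => rfl
    | u+1, _, v+1, _ => rfl
  rw [cmMinor_eq_det rsq ρsq (CMIdx.zero :: complList n J)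
    (CMIdx.zero :: complList n J) rfl, hm]
  norm_num

end CMAux

/-- Sylvester-type identities for Cayley–Menger minors (Lemma 22 of Aomoto–Machida):
for `N = (1,…,n+1)`, `∅ ≠ J ⊊ N`, `J^c = N ∖ J`, and arbitrary real data:
(i) for every `k ∈ J`,
`Σ_{j∈J} B(0⋆∂_jN ; 0j∂_jN) · B(0kJ^c ; 0jJ^c) = B(0N) · B(0⋆J^c ; 0kJ^c)`; and
(ii) `Σ_{j∈J} B(0⋆∂_jN ; 0j∂_jN) · B(0⋆J^c ; 0jJ^c) + B(0⋆N) · B(0J^c)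
  = B(0N) · B(0⋆J^c)`. -/
theorem cm_sylvester_identities (n : ℕ) (hn : 1 ≤ n)
    (rsq : Fin (n + 1) → ℝ) (ρsq : Fin (n + 1) → Fin (n + 1) → ℝ)
    (hsym : ∀ i j, ρsq i j = ρsq j i)
    (J : Finset (Fin (n + 1))) (hne : J.Nonempty) (hproper : J ≠ Finset.univ) :
    (∀ k ∈ J,
      (∑ j ∈ J,
        cmMinor rsq ρsq ([CMIdx.zero, CMIdx.star] ++ delList n j)
            ([CMIdx.zero, CMIdx.pt j] ++ delList n j) *
          cmMinor rsq ρsq ([CMIdx.zero, CMIdx.pt k] ++ complList n J)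
            ([CMIdx.zero, CMIdx.pt j] ++ complList n J)) =
      cmMinor rsq ρsq (CMIdx.zero :: fullList n) (CMIdx.zero :: fullList n) *
        cmMinor rsq ρsq ([CMIdx.zero, CMIdx.star] ++ complList n J)
          ([CMIdx.zero, CMIdx.pt k] ++ complList n J)) ∧
    ((∑ j ∈ J,
        cmMinor rsq ρsq ([CMIdx.zero, CMIdx.star] ++ delList n j)
            ([CMIdx.zero, CMIdx.pt j] ++ delList n j) *
          cmMinor rsq ρsq ([CMIdx.zero, CMIdx.star] ++ complList n J)
            ([CMIdx.zero, CMIdx.pt j] ++ complList n J)) +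
        cmMinor rsq ρsq (CMIdx.zero :: CMIdx.star :: fullList n)
            (CMIdx.zero :: CMIdx.star :: fullList n) *
          cmMinor rsq ρsq (CMIdx.zero :: complList n J) (CMIdx.zero :: complList n J) =
      cmMinor rsq ρsq (CMIdx.zero :: fullList n) (CMIdx.zero :: fullList n) *
        cmMinor rsq ρsq ([CMIdx.zero, CMIdx.star] ++ complList n J)
          ([CMIdx.zero, CMIdx.star] ++ complList n J)) := by
  constructor
  · intro k hk
    simp only [List.cons_append, List.nil_append]
    rw [key_sum n rsq ρsq hsym J (CMIdx.pt k), ind_pt n rsq ρsq J k,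
      adj_star_star n rsq ρsq, mul_zero, sub_zero,
      cmMinor_comm rsq ρsq hsym (CMIdx.zero :: CMIdx.pt k :: complList n J)
        (CMIdx.zero :: CMIdx.star :: complList n J) rfl]
  · simp only [List.cons_append, List.nil_append]
    rw [key_sum n rsq ρsq hsym J CMIdx.star, ind_star n rsq ρsq J,
      adj_star_star n rsq ρsq, det_cmMat n rsq ρsq]
    ring
end

section
/- Let P_1, …, P_m ∈ ℝ^n with m ≥ n+1 and ρ_{jk}^2 = ‖P_j − P_k‖^2. Let (μ_1, …, μ_n) be any permutation of (1, …, n) and let k_1, …, k_n ∈ {1, …, m} be distinct with k_i ∉ {n, n+1} for 1 ≤ i ≤ n−1 and k_n ≠ n+1. Then B(0 μ_1 … μ_n n+1 ; 0 k_1 … k_n n+1) · B(0 μ_1 … μ_n n+1 ; 0 k_1 … k_{n−1} n n+1) = B(0 1 2 … n+1) · B(0 k_1 … k_{n−1} n n+1 ; 0 k_1 … k_n n+1). -/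
/-- Minor of the Cayley–Menger matrix of points `P` (index `none` is the extra `0`-row of
ones, `some j` is the point `P j`), with given row and column index sequences. -/
noncomputable def pMinor {n m : ℕ} (P : Fin m → EuclideanSpace ℝ (Fin n))
    (rows cols : List (Option (Fin m))) : ℝ :=
  if h : rows.length = cols.length then
    Matrix.det (Matrix.of fun a b : Fin rows.length =>
      match rows.get a, cols.get (Fin.cast h b) with
      | none, none => 0
      | none, some _ => 1
      | some _, none => 1
      | some i, some j => ‖P i - P j‖ ^ 2)
  else 0


variable {n m : ℕ} (P : Fin m → EuclideanSpace ℝ (Fin n))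

/-- Cayley–Menger entry function. -/
noncomputable def cmA : Option (Fin m) → Option (Fin m) → ℝ
  | none, none => 0
  | none, some _ => 1
  | some _, none => 1
  | some i, some j => ‖P i - P j‖ ^ 2

noncomputable def uvec : Option (Fin m) → (Fin n ⊕ Fin 2) → ℝ
  | none, Sum.inl _ => 0
  | none, Sum.inr j => if j = 0 then 1 else 0
  | some i, Sum.inl c => P i c
  | some i, Sum.inr j => if j = 0 then ‖P i‖ ^ 2 else 1

noncomputable def vvec : (Fin n ⊕ Fin 2) → Option (Fin m) → ℝ
  | Sum.inl _, none => 0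
  | Sum.inr j, none => if j = 0 then 0 else 1
  | Sum.inl c, some k => -2 * P k c
  | Sum.inr j, some k => if j = 0 then 1 else ‖P k‖ ^ 2

lemma cmA_symm (x y : Option (Fin m)) : cmA P x y = cmA P y x := by
  cases x <;> cases y <;> simp [cmA, norm_sub_rev]

lemma cmA_factor (x y : Option (Fin m)) :
    cmA P x y = ∑ j : Fin n ⊕ Fin 2, uvec P x j * vvec P j y := by
  cases x <;> cases y <;>
    simp [cmA, uvec, vvec, Fintype.sum_sum_type, Fin.sum_univ_two]
  case some.some i k =>
    have h := norm_sub_sq_real (P i) (P k)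
    have hinner : (inner ℝ (P i) (P k) : ℝ) = ∑ c, P i c * P k c := by
      simp [PiLp.inner_apply, RCLike.inner_apply, conj_trivial, mul_comm]
    have h2 : ∑ c : Fin n, P i c * (2 * P k c) = 2 * ∑ c : Fin n, P i c * P k c := by
      rw [Finset.mul_sum]; exact Finset.sum_congr rfl fun c _ => by ring
    rw [h, hinner, h2]; ring

noncomputable def pM2 (l1 l2 : List (Option (Fin m))) : ℝ :=
  Matrix.det (Matrix.of fun a b : Fin (n + 2) => cmA P (l1.getD a none) (l2.getD b none))

noncomputable def dB (l : List (Option (Fin m))) : ℝ :=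
  Matrix.det (Matrix.of fun a b : Fin (n + 2) =>
    uvec P (l.getD a none) (finSumFinEquiv.symm b))

noncomputable def dC (l : List (Option (Fin m))) : ℝ :=
  Matrix.det (Matrix.of fun a b : Fin (n + 2) =>
    vvec P (finSumFinEquiv.symm a) (l.getD b none))

lemma pM2_factor (l1 l2 : List (Option (Fin m))) :
    pM2 P l1 l2 = dB P l1 * dC P l2 := by
  rw [pM2, dB, dC, ← Matrix.det_mul]
  congr 1
  ext a b
  simp only [Matrix.mul_apply, Matrix.of_apply]
  rw [cmA_factor]
  exact (Equiv.sum_comp finSumFinEquiv.symm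
    (fun k => uvec P (l1.getD a none) k * vvec P k (l2.getD b none))).symm

lemma pM2_symm (l1 l2 : List (Option (Fin m))) : pM2 P l1 l2 = pM2 P l2 l1 := by
  rw [pM2, pM2, ← Matrix.det_transpose]
  congr 1
  ext a b
  simp only [Matrix.transpose_apply, Matrix.of_apply]
  exact cmA_symm P _ _

lemma pMinor_eq_pM2 (l1 l2 : List (Option (Fin m))) (h1 : l1.length = n + 2)
    (h2 : l2.length = n + 2) : pMinor P l1 l2 = pM2 P l1 l2 := by
  have h12 : l1.length = l2.length := h1.trans h2.symm
  rw [pMinor, dif_pos h12, pM2]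
  rw [← Matrix.det_submatrix_equiv_self (finCongr h1 : Fin l1.length ≃ Fin (n + 2))]
  congr 1
  ext a b
  simp only [Matrix.submatrix_apply, Matrix.of_apply, finCongr_apply]
  have ha : ((Fin.cast h1 a : Fin (n+2)) : ℕ) < l1.length := by simp [h1]; omega
  have hb : ((Fin.cast h1 b : Fin (n+2)) : ℕ) < l2.length := by simp [h2]; omega
  rw [List.getD_eq_getElem _ _ ha, List.getD_eq_getElem _ _ hb]
  have : l1[((Fin.cast h1 a : Fin (n+2)) : ℕ)] = l1.get a := by simp
  rw [this]
  have : l2[((Fin.cast h1 b : Fin (n+2)) : ℕ)] = l2.get (Fin.cast h12 b) := by simp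
  rw [this]
  cases hx : l1.get a <;> cases hy : l2.get (Fin.cast h12 b) <;> simp [cmA]

def permExt (σ : Equiv.Perm (Fin n)) : Equiv.Perm (Fin (n + 2)) where
  toFun i := if h : 1 ≤ (i : ℕ) ∧ (i : ℕ) ≤ n then
      ⟨(σ ⟨(i : ℕ) - 1, by omega⟩ : Fin n) + 1, by
        have := (σ ⟨(i : ℕ) - 1, by omega⟩).isLt; omega⟩
    else i
  invFun i := if h : 1 ≤ (i : ℕ) ∧ (i : ℕ) ≤ n then
      ⟨(σ.symm ⟨(i : ℕ) - 1, by omega⟩ : Fin n) + 1, by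
        have := (σ.symm ⟨(i : ℕ) - 1, by omega⟩).isLt; omega⟩
    else i
  left_inv := by
    intro i
    dsimp only
    by_cases h : 1 ≤ (i : ℕ) ∧ (i : ℕ) ≤ n
    · have hlt := (σ ⟨(i : ℕ) - 1, by omega⟩).isLt
      rw [dif_pos h, dif_pos (by constructor <;> simp <;> omega)]
      simp only [Nat.add_sub_cancel, Fin.eta, Equiv.symm_apply_apply]
      exact Fin.ext (by simp; omega)
    · rw [dif_neg h, dif_neg h]
  right_inv := by
    intro i
    dsimp only
    by_cases h : 1 ≤ (i : ℕ) ∧ (i : ℕ) ≤ n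
    · have hlt := (σ.symm ⟨(i : ℕ) - 1, by omega⟩).isLt
      rw [dif_pos h, dif_pos (by constructor <;> simp <;> omega)]
      simp only [Nat.add_sub_cancel, Fin.eta, Equiv.apply_symm_apply]
      exact Fin.ext (by simp; omega)
    · rw [dif_neg h, dif_neg h]

lemma getD_cons_ofFn {α} (x d : α) {q : ℕ} (f : Fin q → α) (t : List α) (p : ℕ)
    (h1 : 1 ≤ p) (h2 : p ≤ q) :
    ((x :: List.ofFn f) ++ t).getD p d = f ⟨p - 1, by omega⟩ := by
  rw [List.cons_append]
  obtain ⟨p, rfl⟩ : ∃ p', p = p' + 1 := ⟨p - 1, by omega⟩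
  rw [List.getD_cons_succ]
  have hb : p < (List.ofFn f ++ t).length := by simp; omega
  rw [List.getD_eq_getElem _ _ hb, List.getElem_append_left (by simp; omega),
    List.getElem_ofFn]
  exact congrArg f (Fin.ext (by simp))

lemma getD_cons_ofFn_right {α} (x d : α) {q : ℕ} (f : Fin q → α) (t : List α) (p : ℕ)
    (h1 : q + 1 ≤ p) :
    ((x :: List.ofFn f) ++ t).getD p d = t.getD (p - 1 - q) d := by
  rw [List.cons_append]
  obtain ⟨p, rfl⟩ : ∃ p', p = p' + 1 := ⟨p - 1, by omega⟩
  rw [List.getD_cons_succ]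
  simp only [Nat.add_sub_cancel]
  rcases Nat.lt_or_ge p (q + t.length) with hb | hb
  · rw [List.getD_eq_getElem _ _ (by simp; omega), List.getD_eq_getElem _ _ (by omega),
      List.getElem_append_right (by simp; omega)]
    simp
  · rw [List.getD_eq_default _ _ (by simp; omega), List.getD_eq_default _ _ (by omega)]

lemma getD_cons_ofFn' {α} (x d : α) {q : ℕ} (f : Fin q → α) (p : ℕ)
    (h1 : 1 ≤ p) (h2 : p ≤ q) :
    (x :: List.ofFn f).getD p d = f ⟨p - 1, by omega⟩ := by
  obtain ⟨p, rfl⟩ : ∃ p', p = p' + 1 := ⟨p - 1, by omega⟩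
  rw [List.getD_cons_succ]
  rw [List.getD_eq_getElem _ _ (by simp; omega), List.getElem_ofFn]
  exact congrArg f (Fin.ext (by simp))

lemma R_getD_eq (hm : n < m) (σ : Equiv.Perm (Fin n)) (i : Fin (n + 2)) :
    ((none : Option (Fin m)) ::
        (List.ofFn fun j : Fin n => some (⟨((σ j : Fin n) : ℕ), by omega⟩ : Fin m)) ++
        [some (⟨n, by omega⟩ : Fin m)]).getD (i : ℕ) none =
      ((none : Option (Fin m)) ::
        List.ofFn fun j : Fin (n + 1) => some (⟨(j : ℕ), by omega⟩ : Fin m)).getD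
        ((permExt σ i : Fin (n + 2)) : ℕ) none := by
  rcases i with ⟨iv, hiv⟩
  by_cases h : 1 ≤ iv ∧ iv ≤ n
  · have hσ := (σ ⟨iv - 1, by omega⟩).isLt
    have hval : ((permExt σ ⟨iv, hiv⟩ : Fin (n + 2)) : ℕ) =
        ((σ ⟨iv - 1, by omega⟩ : Fin n) : ℕ) + 1 := by
      show ((if h : 1 ≤ iv ∧ iv ≤ n then _ else _ : Fin (n + 2)) : ℕ) = _
      rw [dif_pos h]
    rw [hval, getD_cons_ofFn _ _ _ _ iv h.1 h.2,
      getD_cons_ofFn' _ _ _ _ (by omega) (by omega)]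
    simp
  · have hval : permExt σ ⟨iv, hiv⟩ = ⟨iv, hiv⟩ := by
      show (if h : 1 ≤ iv ∧ iv ≤ n then _ else _ : Fin (n + 2)) = _
      rw [dif_neg h]
    rw [hval]
    rcases Nat.eq_zero_or_pos iv with h0 | h1
    · subst h0; rfl
    · have hn1 : iv = n + 1 := by omega
      subst hn1
      have hv : ((⟨n + 1, hiv⟩ : Fin (n + 2)) : ℕ) = n + 1 := rfl
      rw [hv, getD_cons_ofFn_right _ _ _ _ _ (by omega),
        getD_cons_ofFn' _ _ _ _ (by omega) (by omega)]
      simp [Nat.sub_self]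

lemma pM2_R_eq_S (hm : n < m) (σ : Equiv.Perm (Fin n)) :
    pM2 P ((none : Option (Fin m)) ::
        (List.ofFn fun j : Fin n => some (⟨((σ j : Fin n) : ℕ), by omega⟩ : Fin m)) ++
        [some (⟨n, by omega⟩ : Fin m)])
      ((none : Option (Fin m)) ::
        (List.ofFn fun j : Fin n => some (⟨((σ j : Fin n) : ℕ), by omega⟩ : Fin m)) ++
        [some (⟨n, by omega⟩ : Fin m)]) =
    pM2 P ((none : Option (Fin m)) ::
        List.ofFn fun j : Fin (n + 1) => some (⟨(j : ℕ), by omega⟩ : Fin m))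
      ((none : Option (Fin m)) ::
        List.ofFn fun j : Fin (n + 1) => some (⟨(j : ℕ), by omega⟩ : Fin m)) := by
  rw [pM2, pM2, ← Matrix.det_submatrix_equiv_self (permExt σ)
    (Matrix.of fun a b : Fin (n + 2) => cmA P
      (((none : Option (Fin m)) ::
        List.ofFn fun j : Fin (n + 1) => some (⟨(j : ℕ), by omega⟩ : Fin m)).getD a none)
      (((none : Option (Fin m)) ::
        List.ofFn fun j : Fin (n + 1) => some (⟨(j : ℕ), by omega⟩ : Fin m)).getD b none))]
  congr 1
  ext a b
  simp only [Matrix.submatrix_apply, Matrix.of_apply]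
  rw [R_getD_eq hm σ a, R_getD_eq hm σ b]

/-- Identity (62) of Aomoto–Machida: for points `P_1,…,P_m ∈ ℝⁿ` (`m ≥ n+1`), a
permutation `(μ_1,…,μ_n)` of `(1,…,n)` and distinct `k_1,…,k_n` with `k_i ∉ {n, n+1}`
for `i ≤ n−1` and `k_n ≠ n+1`:
`B(0 μ₁…μₙ n+1 ; 0 k₁…kₙ n+1) · B(0 μ₁…μₙ n+1 ; 0 k₁…k_{n−1} n n+1)
  = B(0 1 2 … n+1) · B(0 k₁…k_{n−1} n n+1 ; 0 k₁…kₙ n+1)`.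
(1-based labels are represented by `Fin`-values one less.) -/
theorem cm_points_jacobi_identity (n m : ℕ) (hn : 1 ≤ n) (hm : n + 1 ≤ m)
    (P : Fin m → EuclideanSpace ℝ (Fin n))
    (σ : Equiv.Perm (Fin n)) (kf : Fin n → Fin m) (hk : Function.Injective kf)
    (hk1 : ∀ i : Fin n, (i : ℕ) < n - 1 → ((kf i : Fin m) : ℕ) ≠ n - 1 ∧ ((kf i : Fin m) : ℕ) ≠ n)
    (hkn : ((kf ⟨n - 1, by omega⟩ : Fin m) : ℕ) ≠ n) :
    pMinor P
        ((none : Option (Fin m)) ::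
          (List.ofFn fun i : Fin n => some (⟨((σ i : Fin n) : ℕ), by omega⟩ : Fin m)) ++
          [some (⟨n, by omega⟩ : Fin m)])
        ((none : Option (Fin m)) :: (List.ofFn fun i : Fin n => some (kf i)) ++
          [some (⟨n, by omega⟩ : Fin m)]) *
      pMinor P
        ((none : Option (Fin m)) ::
          (List.ofFn fun i : Fin n => some (⟨((σ i : Fin n) : ℕ), by omega⟩ : Fin m)) ++
          [some (⟨n, by omega⟩ : Fin m)])
        ((none : Option (Fin m)) ::
          (List.ofFn fun i : Fin (n - 1) => some (kf ⟨(i : ℕ), by omega⟩)) ++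
          [some (⟨n - 1, by omega⟩ : Fin m), some (⟨n, by omega⟩ : Fin m)]) =
    pMinor P
        ((none : Option (Fin m)) ::
          List.ofFn fun i : Fin (n + 1) => some (⟨(i : ℕ), by omega⟩ : Fin m))
        ((none : Option (Fin m)) ::
          List.ofFn fun i : Fin (n + 1) => some (⟨(i : ℕ), by omega⟩ : Fin m)) *
      pMinor P
        ((none : Option (Fin m)) ::
          (List.ofFn fun i : Fin (n - 1) => some (kf ⟨(i : ℕ), by omega⟩)) ++
          [some (⟨n - 1, by omega⟩ : Fin m), some (⟨n, by omega⟩ : Fin m)])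
        ((none : Option (Fin m)) :: (List.ofFn fun i : Fin n => some (kf i)) ++
          [some (⟨n, by omega⟩ : Fin m)]) := by
  set R : List (Option (Fin m)) := (none : Option (Fin m)) ::
    (List.ofFn fun i : Fin n => some (⟨((σ i : Fin n) : ℕ), by omega⟩ : Fin m)) ++
    [some (⟨n, by omega⟩ : Fin m)] with hR
  set S : List (Option (Fin m)) := (none : Option (Fin m)) ::
    List.ofFn fun i : Fin (n + 1) => some (⟨(i : ℕ), by omega⟩ : Fin m) with hS
  set C1 : List (Option (Fin m)) := (none : Option (Fin m)) ::
    (List.ofFn fun i : Fin n => some (kf i)) ++ [some (⟨n, by omega⟩ : Fin m)] with hC1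
  set C2 : List (Option (Fin m)) := (none : Option (Fin m)) ::
    (List.ofFn fun i : Fin (n - 1) => some (kf ⟨(i : ℕ), by omega⟩)) ++
    [some (⟨n - 1, by omega⟩ : Fin m), some (⟨n, by omega⟩ : Fin m)] with hC2
  have hlR : R.length = n + 2 := by simp [hR]
  have hlS : S.length = n + 2 := by simp [hS]
  have hlC1 : C1.length = n + 2 := by simp [hC1]
  have hlC2 : C2.length = n + 2 := by simp [hC2]; omega
  rw [pMinor_eq_pM2 P R C1 hlR hlC1, pMinor_eq_pM2 P R C2 hlR hlC2,
    pMinor_eq_pM2 P S S hlS hlS, pMinor_eq_pM2 P C2 C1 hlC2 hlC1,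
    pM2_factor, pM2_factor, pM2_factor, pM2_factor]
  have e1 : dB P R * dC P C2 = dB P C2 * dC P R := by
    have h := pM2_symm P R C2
    rwa [pM2_factor, pM2_factor] at h
  have e2 : dB P R * dC P R = dB P S * dC P S := by
    have h : pM2 P R R = pM2 P S S := by
      rw [hR, hS]; exact pM2_R_eq_S P hm σ
    rwa [pM2_factor, pM2_factor] at h
  linear_combination (dB P R * dC P C1) * e1 + (dC P C1 * dB P C2) * e2
end
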